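/- Under the RSWA certificate conditions, the set M = X_F ∩ {x ∈ X_S : V(x) ≤ β} is compact and forward invariant: any trajectory in M remains in M for all future time. -/

import Mathlib

/-- Under the RSWA certificate conditions, the set
`M = X_F ∩ {x ∈ X_S : V x ≤ β}` is compact and forward invariant. -/
theorem rswa_invariant_set {n : ℕ}
    (f : EuclideanSpace ℝ (Fin n) → EuclideanSpace ℝ (Fin n))
    (XS XF : Set (EuclideanSpace ℝ (Fin n)))
    (hXS : IsCompact XS) (hXF : IsCompact XF)
    (hXFint : XF ⊆ interior XS)
    (hlip : ∃ K : NNReal, LipschitzWith K f)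
    (V : EuclideanSpace ℝ (Fin n) → ℝ)
    (hV : ContDiff ℝ 1 V)
    (γ β : ℝ) (hγ : 0 < γ) (hβ : β < 0)
    (hVbdF : ∀ x ∈ frontier XF, β < V x)
    (hVdot : ∀ x ∈ XF \ interior {x ∈ XS | V x ≤ β},
      (fderiv ℝ V x) (f x) ≤ -γ) :
    IsCompact (XF ∩ {x ∈ XS | V x ≤ β}) ∧
    ∀ (ξ : ℝ → EuclideanSpace ℝ (Fin n)) (t₀ : ℝ),
      (∀ t, HasDerivAt ξ (f (ξ t)) t) →
      ξ t₀ ∈ XF ∩ {x ∈ XS | V x ≤ β} →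
      ∀ t, t₀ ≤ t → ξ t ∈ XF ∩ {x ∈ XS | V x ≤ β} := by
  obtain ⟨K, hK⟩ := hlip
  have hcf : Continuous f := hK.continuous
  have hVc : Continuous V := hV.continuous
  set Ω : Set (EuclideanSpace ℝ (Fin n)) := {x ∈ XS | V x ≤ β} with hΩ
  have hΩclosed : IsClosed Ω := by
    have : Ω = XS ∩ {x | V x ≤ β} := rfl
    rw [this]
    exact hXS.isClosed.inter (isClosed_le hVc continuous_const)
  have hMcompact : IsCompact (XF ∩ Ω) := hXF.inter_right hΩclosed
  have hMclosed : IsClosed (XF ∩ Ω) := hXF.isClosed.inter hΩclosed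
  -- M is contained in the interior of XF
  have hMint : XF ∩ Ω ⊆ interior XF := by
    intro x hx
    by_contra hxi
    have hfr : x ∈ frontier XF := ⟨subset_closure hx.1, hxi⟩
    exact absurd hx.2.2 (not_le.mpr (hVbdF x hfr))
  refine ⟨hMcompact, ?_⟩
  intro ξ t₀ hξ hmem
  have hcξ : Continuous ξ := by
    rw [continuous_iff_continuousAt]
    exact fun t => (hξ t).continuousAt
  -- derivative of V ∘ ξ
  have hg : ∀ s, HasDerivAt (fun u => V (ξ u)) ((fderiv ℝ V (ξ s)) (f (ξ s))) s := by
    intro s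
    exact (hV.differentiable one_ne_zero (ξ s)).hasFDerivAt.comp_hasDerivAt s (hξ s)
  have hcg' : Continuous fun s => (fderiv ℝ V (ξ s)) (f (ξ s)) :=
    ((hV.continuous_fderiv one_ne_zero).comp hcξ).clm_apply (hcf.comp hcξ)
  -- local forward invariance
  have key : ∀ τ, ξ τ ∈ XF ∩ Ω → ∃ ε > 0, ∀ s ∈ Set.Icc τ (τ + ε), ξ s ∈ XF ∩ Ω := by
    intro τ hτ
    -- stay in interior XF for a while
    have hOpen1 : IsOpen (ξ ⁻¹' interior XF) := isOpen_interior.preimage hcξ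
    obtain ⟨δ₁, hδ₁, hball₁⟩ :=
      Metric.isOpen_iff.1 hOpen1 τ (by exact hMint hτ)
    by_cases hcase : ξ τ ∈ interior Ω
    · -- interior case: use continuity into interior Ω
      have hOpen2 : IsOpen (ξ ⁻¹' interior Ω) := isOpen_interior.preimage hcξ
      obtain ⟨δ₂, hδ₂, hball₂⟩ := Metric.isOpen_iff.1 hOpen2 τ hcase
      refine ⟨min δ₁ δ₂ / 2, by positivity, ?_⟩
      intro s hs
      have hd : dist s τ < min δ₁ δ₂ := by
        rw [Real.dist_eq, abs_of_nonneg (by linarith [hs.1])]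
        have := hs.2
        have h2 : min δ₁ δ₂ / 2 < min δ₁ δ₂ := half_lt_self (lt_min hδ₁ hδ₂)
        linarith
      have h1 : ξ s ∈ interior XF := hball₁ (lt_of_lt_of_le hd (min_le_left _ _))
      have h2 : ξ s ∈ interior Ω := hball₂ (lt_of_lt_of_le hd (min_le_right _ _))
      exact ⟨interior_subset h1, interior_subset h2⟩
    · -- boundary case: V̇ ≤ -γ < 0 near τ, so V decreases
      have hder : (fderiv ℝ V (ξ τ)) (f (ξ τ)) ≤ -γ := hVdot _ ⟨hτ.1, hcase⟩
      have hOpen3 : IsOpen {s : ℝ | (fderiv ℝ V (ξ s)) (f (ξ s)) < 0} :=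
        isOpen_lt hcg' continuous_const
      obtain ⟨δ₂, hδ₂, hball₂⟩ := Metric.isOpen_iff.1 hOpen3 τ (by
        show (fderiv ℝ V (ξ τ)) (f (ξ τ)) < 0
        linarith)
      refine ⟨min δ₁ δ₂ / 2, by positivity, ?_⟩
      intro s hs
      have hd : dist s τ < min δ₁ δ₂ := by
        rw [Real.dist_eq, abs_of_nonneg (by linarith [hs.1])]
        have := hs.2
        have h2 : min δ₁ δ₂ / 2 < min δ₁ δ₂ := half_lt_self (lt_min hδ₁ hδ₂)
        linarith
      have h1 : ξ s ∈ interior XF := hball₁ (lt_of_lt_of_le hd (min_le_left _ _))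
      have hXFs : ξ s ∈ XF := interior_subset h1
      refine ⟨hXFs, hXFint hXFs |> interior_subset, ?_⟩
      -- V (ξ s) ≤ V (ξ τ) ≤ β via negative derivative on the interval
      have hanti : AntitoneOn (fun u => V (ξ u)) (Set.Icc τ (τ + min δ₁ δ₂ / 2)) := by
        apply antitoneOn_of_deriv_nonpos (convex_Icc _ _)
        · exact (hVc.comp hcξ).continuousOn
        · intro x _
          exact (hg x).differentiableAt.differentiableWithinAt
        · intro x hx
          rw [interior_Icc] at hx
          have hdx : dist x τ < min δ₁ δ₂ := by
            rw [Real.dist_eq, abs_of_nonneg (by linarith [hx.1])]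
            have := hx.2
            have h2 : min δ₁ δ₂ / 2 < min δ₁ δ₂ := half_lt_self (lt_min hδ₁ hδ₂)
            linarith
          have := hball₂ (lt_of_lt_of_le hdx (min_le_right _ _))
          rw [(hg x).deriv]
          exact le_of_lt this
      have hVle : V (ξ s) ≤ V (ξ τ) := by
        rcases eq_or_lt_of_le hs.1 with h | h
        · rw [← h]
        · exact hanti (Set.left_mem_Icc.2 (by linarith [hs.2, hs.1])) hs hs.1
      exact le_trans hVle hτ.2.2
  -- global: first exit time argument
  intro t ht
  by_contra hnot
  set A : Set ℝ := {s | s ∈ Set.Icc t₀ t ∧ ξ s ∉ XF ∩ Ω} with hA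
  have hAne : A.Nonempty := ⟨t, ⟨ht, le_rfl⟩, hnot⟩
  have hAbdd : BddBelow A := ⟨t₀, fun s hs => hs.1.1⟩
  set τ := sInf A with hτdef
  have hτ₀ : t₀ ≤ τ := le_csInf hAne fun s hs => hs.1.1
  have hτt : τ ≤ t := csInf_le hAbdd ⟨⟨ht, le_rfl⟩, hnot⟩
  -- all points strictly before τ (and ≥ t₀) are in M
  have hbefore : ∀ s, t₀ ≤ s → s < τ → ξ s ∈ XF ∩ Ω := by
    intro s hs₁ hs₂
    by_contra h
    exact absurd (csInf_le hAbdd ⟨⟨hs₁, le_trans (le_of_lt hs₂) hτt⟩, h⟩) (not_le.2 hs₂)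
  -- ξ τ ∈ M
  have hτM : ξ τ ∈ XF ∩ Ω := by
    rcases eq_or_lt_of_le hτ₀ with h | h
    · rwa [← h]
    · have htend : Filter.Tendsto ξ (nhdsWithin τ (Set.Iio τ)) (nhds (ξ τ)) :=
        (hcξ.tendsto τ).mono_left nhdsWithin_le_nhds
      refine hMclosed.mem_of_tendsto htend ?_
      filter_upwards [Ioo_mem_nhdsLT_of_mem (Set.mem_Ioc.2 ⟨h, le_rfl⟩)] with s hs
      exact hbefore s (le_of_lt hs.1) hs.2
  obtain ⟨ε, hε, hεM⟩ := key τ hτM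
  obtain ⟨a, haA, ha⟩ := exists_lt_of_csInf_lt hAne (by linarith : sInf A < τ + ε)
  have haτ : τ ≤ a := csInf_le hAbdd haA
  exact haA.2 (hεM a ⟨haτ, le_of_lt ha⟩)
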